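/- Let L : ℝ^d → ℝ be twice continuously differentiable and strictly convex, with everywhere positive definite Hessian ∇²L, and suppose there is N ≥ 1 such that ‖(∇²L(x))⁻¹ ∇²L(y)‖ ≤ N for all x, y ∈ ℝ^d. Fix a step size η > 0 and x ∈ ℝ^d, and define the Newton update x_new := x − η · (∇²L(x))⁻¹ ∇L(x). Then L(x_new) − L(x) ≤ −(η − (N/2)η²) · ⟨∇L(x), (∇²L(x))⁻¹ ∇L(x)⟩. -/

import Mathlib

open RealInnerProductSpace

noncomputable section

/-- The Hessian of `L` at `x`, as a continuous linear map: the Fréchet derivative of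
the gradient of `L`. -/
def Hess {d : ℕ} (L : EuclideanSpace ℝ (Fin d) → ℝ) (x : EuclideanSpace ℝ (Fin d)) :
    EuclideanSpace ℝ (Fin d) →L[ℝ] EuclideanSpace ℝ (Fin d) :=
  fderiv ℝ (gradient L) x

namespace Statement18Aux

variable {d : ℕ}

local notation "E" => EuclideanSpace ℝ (Fin d)

lemma gradContDiff {L : E → ℝ} (hL : ContDiff ℝ 2 L) : ContDiff ℝ 1 (gradient L) := by
  have h : gradient L = (InnerProductSpace.toDual ℝ E).symm ∘ (fderiv ℝ L) := rfl
  rw [h]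
  exact (InnerProductSpace.toDual ℝ E).symm.contDiff.comp (hL.fderiv_right (by norm_num))

lemma hasFDerivGrad {L : E → ℝ} (hL : ContDiff ℝ 2 L) (y : E) :
    HasFDerivAt (gradient L) (Hess L y) y :=
  (((gradContDiff hL).differentiable (by norm_num)) y).hasFDerivAt

lemma inner_grad {L : E → ℝ} (y v : E) : ⟪gradient L y, v⟫ = fderiv ℝ L y v :=
  InnerProductSpace.toDual_symm_apply

lemma hess_symm {L : E → ℝ} (hL : ContDiff ℝ 2 L) (y v w : E) :
    ⟪Hess L y v, w⟫ = ⟪v, Hess L y w⟫ := by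
  have hdL : ∀ z, HasFDerivAt L (fderiv ℝ L z) z := fun z =>
    ((hL.differentiable (by norm_num)) z).hasFDerivAt
  have h1 : ContDiff ℝ 1 (fderiv ℝ L) := hL.fderiv_right (by norm_num)
  have h2 : HasFDerivAt (fderiv ℝ L) (fderiv ℝ (fderiv ℝ L) y) y :=
    ((h1.differentiable (by norm_num)) y).hasFDerivAt
  have hsymm := second_derivative_symmetric hdL h2
  have hHess : ∀ z, Hess L y z =
      (InnerProductSpace.toDual ℝ E).symm (fderiv ℝ (fderiv ℝ L) y z) := by
    intro z
    have h : gradient L = (InnerProductSpace.toDual ℝ E).symm ∘ (fderiv ℝ L) := rfl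
    show fderiv ℝ (gradient L) y z = _
    rw [h, LinearIsometryEquiv.comp_fderiv]
    rfl
  rw [hHess v, hHess w,
    real_inner_comm ((InnerProductSpace.toDual ℝ E).symm (fderiv ℝ (fderiv ℝ L) y w)) v]
  rw [InnerProductSpace.toDual_symm_apply, InnerProductSpace.toDual_symm_apply]
  exact hsymm v w

/-- The key quadratic-form comparison: if `‖H⁻¹ A‖ ≤ N` with `H` positive definite
self-adjoint and `A` positive semidefinite self-adjoint, then `⟪v, A v⟫ ≤ N ⟪v, H v⟫`. -/
lemma quad_comparison (H A : E →L[ℝ] E)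
    (hHsymm : ∀ v w : E, ⟪H v, w⟫ = ⟪v, H w⟫)
    (hAsymm : ∀ v w : E, ⟪A v, w⟫ = ⟪v, A w⟫)
    (hHpos : ∀ v : E, v ≠ 0 → 0 < ⟪v, H v⟫)
    (hApos : ∀ v : E, 0 ≤ ⟪v, A v⟫)
    (hinv1 : ∀ g : E, H (H.inverse g) = g)
    (N : ℝ) (hN : 1 ≤ N) (hb : ‖H.inverse.comp A‖ ≤ N)
    (v : E) : ⟪v, A v⟫ ≤ N * ⟪v, H v⟫ := by
  rcases eq_or_ne v 0 with rfl | hv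
  · simp
  have hN0 : (0:ℝ) < N := lt_of_lt_of_le one_pos hN
  set B : E →L[ℝ] E := H.inverse.comp A with hB
  have hHB : ∀ w : E, H (B w) = A w := fun w => hinv1 (A w)
  have hHnn : ∀ w : E, 0 ≤ ⟪w, H w⟫ := by
    intro w
    rcases eq_or_ne w 0 with rfl | hw
    · simp
    · exact le_of_lt (hHpos w hw)
  have hBsa : ∀ u w : E, ⟪u, H (B w)⟫ = ⟪B u, H w⟫ := by
    intro u w
    rw [hHB w, ← hAsymm u w, ← hHB u, hHsymm (B u) w]
  have hIter : ∀ (m : ℕ) (u w : E), ⟪u, H (B^[m] w)⟫ = ⟪B^[m] u, H w⟫ := by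
    intro m
    induction m with
    | zero => intro u w; simp
    | succ m ih =>
      intro u w
      rw [Function.iterate_succ_apply', hBsa u (B^[m] w), ih (B u) w,
        ← Function.iterate_succ_apply]
  set S : ℕ → ℝ := fun m => ⟪v, H (B^[m] v)⟫ with hS
  have hS0 : S 0 = ⟪v, H v⟫ := by simp [hS]
  have hS1 : S 1 = ⟪v, A v⟫ := by simp [hS, hHB]
  have hSsq : ∀ m, ⟪B^[m] v, H (B^[m] v)⟫ = S (2 * m) := by
    intro m
    rw [← hIter m v (B^[m] v), ← Function.iterate_add_apply, two_mul]
  have hSnonneg : ∀ m, 0 ≤ S m := by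
    intro m
    rcases Nat.even_or_odd m with ⟨k, hk⟩ | ⟨k, hk⟩
    · subst hk
      have : S (k + k) = ⟪B^[k] v, H (B^[k] v)⟫ := by
        rw [hSsq k, two_mul]
      rw [this]
      exact hHnn _
    · subst hk
      have h1 : S (2 * k + 1) = ⟪v, H (B^[k] (B (B^[k] v)))⟫ := by
        have : 2 * k + 1 = k + (1 + k) := by ring
        simp only [hS, this, Function.iterate_add_apply, Function.iterate_one]
      have h2 : ⟪v, H (B^[k] (B (B^[k] v)))⟫ = ⟪B^[k] v, H (B (B^[k] v))⟫ :=
        hIter k v (B (B^[k] v))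
      rw [h1, h2, hHB]
      exact hApos _
  -- Cauchy-Schwarz for the H-inner product
  have key : ∀ a b c : ℝ, 0 < c → (∀ t : ℝ, 0 ≤ a - 2 * t * b + t ^ 2 * c) → b ^ 2 ≤ a * c := by
    intro a b c hc h
    have h1 := h (b / c)
    have hc' : c ≠ 0 := ne_of_gt hc
    have e : a - 2 * (b / c) * b + (b / c) ^ 2 * c = a - b ^ 2 / c := by
      field_simp
      ring
    rw [e, sub_nonneg, div_le_iff₀ hc] at h1
    exact h1
  have hCS : ∀ u w : E, ⟪u, H w⟫ ^ 2 ≤ ⟪u, H u⟫ * ⟪w, H w⟫ := by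
    intro u w
    rcases eq_or_ne w 0 with rfl | hw
    · simp
    have hc : (0:ℝ) < ⟪w, H w⟫ := hHpos w hw
    apply key _ _ _ hc
    intro t
    have h0 := hHnn (u - t • w)
    have hwu : ⟪w, H u⟫ = ⟪u, H w⟫ := by
      rw [← hHsymm w u, real_inner_comm]
    simp only [map_sub, map_smul, inner_sub_left, inner_sub_right,
      real_inner_smul_left, real_inner_smul_right] at h0
    rw [hwu] at h0
    nlinarith [h0]
  have hs0 : (0:ℝ) < S 0 := by rw [hS0]; exact hHpos v hv
  have hGrow : ∀ k : ℕ, (S 1) ^ (2 ^ k) * S 0 ≤ (S 0) ^ (2 ^ k) * S (2 ^ k) := by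
    intro k
    induction k with
    | zero => simp [mul_comm]
    | succ k ih =>
      have hq : (S (2 ^ k)) ^ 2 ≤ S 0 * S (2 ^ (k + 1)) := by
        have h1 := hCS v (B^[2 ^ k] v)
        rw [hSsq (2 ^ k)] at h1
        have h2 : 2 * 2 ^ k = 2 ^ (k + 1) := by ring
        rw [h2, ← hS0] at h1
        exact h1
      have hsq : ((S 1) ^ (2 ^ k) * S 0) ^ 2 ≤ ((S 0) ^ (2 ^ k) * S (2 ^ k)) ^ 2 := by
        apply pow_le_pow_left₀ _ ih
        exact mul_nonneg (pow_nonneg (hSnonneg 1) _) (le_of_lt hs0)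
      have hexp : ∀ a : ℝ, a ^ (2 ^ (k + 1)) = (a ^ (2 ^ k)) ^ 2 := by
        intro a
        rw [show (2:ℕ) ^ (k+1) = 2 ^ k * 2 from by ring, pow_mul]
      rw [hexp, hexp (S 0)]
      have h3 : (S 1 ^ 2 ^ k) ^ 2 * (S 0) ^ 2 ≤ ((S 0) ^ 2 ^ k) ^ 2 * (S (2 ^ k)) ^ 2 := by
        calc (S 1 ^ 2 ^ k) ^ 2 * (S 0) ^ 2 = ((S 1) ^ (2 ^ k) * S 0) ^ 2 := by ring
          _ ≤ ((S 0) ^ (2 ^ k) * S (2 ^ k)) ^ 2 := hsq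
          _ = ((S 0) ^ 2 ^ k) ^ 2 * (S (2 ^ k)) ^ 2 := by ring
      have h4 : ((S 0) ^ 2 ^ k) ^ 2 * (S (2 ^ k)) ^ 2 ≤
          ((S 0) ^ 2 ^ k) ^ 2 * (S 0 * S (2 ^ (k + 1))) :=
        mul_le_mul_of_nonneg_left hq (by positivity)
      apply le_of_mul_le_mul_right _ hs0
      calc (S 1 ^ 2 ^ k) ^ 2 * S 0 * S 0 = (S 1 ^ 2 ^ k) ^ 2 * (S 0) ^ 2 := by ring
        _ ≤ ((S 0) ^ 2 ^ k) ^ 2 * (S 0 * S (2 ^ (k + 1))) := le_trans h3 h4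
        _ = (S 0 ^ 2 ^ k) ^ 2 * S (2 ^ (k + 1)) * S 0 := by ring
  have hBn : ∀ m : ℕ, ‖(⇑B)^[m] v‖ ≤ N ^ m * ‖v‖ := by
    intro m
    induction m with
    | zero => simp
    | succ m ih =>
      rw [Function.iterate_succ_apply']
      calc ‖B ((⇑B)^[m] v)‖ ≤ ‖B‖ * ‖(⇑B)^[m] v‖ := B.le_opNorm _
        _ ≤ N * (N ^ m * ‖v‖) :=
            mul_le_mul hb ih (norm_nonneg _) (le_of_lt hN0)
        _ = N ^ (m + 1) * ‖v‖ := by ring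
  set C := ‖H‖ * ‖v‖ ^ 2 with hC
  have hSb : ∀ m : ℕ, S m ≤ C * N ^ m := by
    intro m
    calc S m ≤ ‖v‖ * ‖H ((⇑B)^[m] v)‖ := real_inner_le_norm _ _
      _ ≤ ‖v‖ * (‖H‖ * ‖(⇑B)^[m] v‖) :=
          mul_le_mul_of_nonneg_left (H.le_opNorm _) (norm_nonneg _)
      _ ≤ ‖v‖ * (‖H‖ * (N ^ m * ‖v‖)) :=
          mul_le_mul_of_nonneg_left
            (mul_le_mul_of_nonneg_left (hBn m) (norm_nonneg _)) (norm_nonneg _)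
      _ = C * N ^ m := by rw [hC]; ring
  rw [← hS1, ← hS0]
  by_contra hcon
  push_neg at hcon
  have hC0 : 0 ≤ C := by positivity
  set r := S 1 / (N * S 0) with hr
  have hNs : 0 < N * S 0 := mul_pos hN0 hs0
  have hr1 : 1 < r := (one_lt_div hNs).mpr hcon
  have hrk : ∀ k : ℕ, r ^ (2 ^ k) ≤ C / S 0 := by
    intro k
    rw [hr, div_pow, div_le_div_iff₀ (by positivity) hs0]
    have h1 := hGrow k
    have h2 : (S 0) ^ (2 ^ k) * S (2 ^ k) ≤ (S 0) ^ (2 ^ k) * (C * N ^ (2 ^ k)) :=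
      mul_le_mul_of_nonneg_left (hSb (2 ^ k)) (by positivity)
    calc S 1 ^ 2 ^ k * S 0 ≤ (S 0) ^ (2 ^ k) * (C * N ^ (2 ^ k)) := le_trans h1 h2
      _ = C * (N * S 0) ^ (2 ^ k) := by rw [mul_pow]; ring
  obtain ⟨n, hn⟩ := pow_unbounded_of_one_lt (C / S 0) hr1
  have h2n : r ^ n ≤ r ^ (2 ^ n) := pow_le_pow_right₀ (le_of_lt hr1) (Nat.lt_two_pow_self (n := n)).le
  exact absurd (le_trans h2n (hrk n)) (not_le.mpr hn)

end Statement18Aux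

set_option maxHeartbeats 1000000 in
/-- for the Newton update x_new = x − η (∇²L(x))⁻¹ ∇L(x),
L(x_new) − L(x) ≤ −(η − (N/2)η²) ⟨∇L(x), (∇²L(x))⁻¹ ∇L(x)⟩. -/
theorem statement18 (d : ℕ) (hd : 0 < d) (L : EuclideanSpace ℝ (Fin d) → ℝ)
    (hL : ContDiff ℝ 2 L)
    (hconv : StrictConvexOn ℝ Set.univ L)
    (hPD : ∀ x v : EuclideanSpace ℝ (Fin d), v ≠ 0 → 0 < ⟪v, Hess L x v⟫)
    (N : ℝ) (hN : 1 ≤ N)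
    (hbound : ∀ x y, ‖(Hess L x).inverse.comp (Hess L y)‖ ≤ N)
    (η : ℝ) (hη : 0 < η) (x : EuclideanSpace ℝ (Fin d)) :
    L (x - η • (Hess L x).inverse (gradient L x)) - L x ≤
      -(η - N / 2 * η ^ 2) *
        ⟪gradient L x, (Hess L x).inverse (gradient L x)⟫ := by
  classical
  set g : EuclideanSpace ℝ (Fin d) := gradient L x with hgdef
  -- invertibility of the Hessian at x
  have hinj : Function.Injective ⇑(Hess L x) := by
    intro a b hab
    by_contra hne
    have hv : a - b ≠ 0 := sub_ne_zero.mpr hne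
    have h := hPD x (a - b) hv
    rw [map_sub, hab, sub_self, inner_zero_right] at h
    exact lt_irrefl 0 h
  have hsurj : Function.Surjective ⇑(Hess L x) :=
    LinearMap.injective_iff_surjective.mp hinj
  let e0 : EuclideanSpace ℝ (Fin d) ≃ₗ[ℝ] EuclideanSpace ℝ (Fin d) :=
    LinearEquiv.ofBijective ((Hess L x) : EuclideanSpace ℝ (Fin d) →ₗ[ℝ] EuclideanSpace ℝ (Fin d))
      ⟨hinj, hsurj⟩
  let e : EuclideanSpace ℝ (Fin d) ≃L[ℝ] EuclideanSpace ℝ (Fin d) := e0.toContinuousLinearEquiv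
  have he : (e : EuclideanSpace ℝ (Fin d) →L[ℝ] EuclideanSpace ℝ (Fin d)) = Hess L x := by
    exact ContinuousLinearMap.ext fun w => rfl
  have hinv_eq : (Hess L x).inverse =
      (e.symm : EuclideanSpace ℝ (Fin d) →L[ℝ] EuclideanSpace ℝ (Fin d)) := by
    rw [← he, ContinuousLinearMap.inverse_equiv]
  have hinv1 : ∀ u, Hess L x ((Hess L x).inverse u) = u := by
    intro u
    rw [hinv_eq, ← he]
    exact e.apply_symm_apply u
  set v : EuclideanSpace ℝ (Fin d) := (Hess L x).inverse g with hvdef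
  have hHv : Hess L x v = g := hinv1 g
  set u : EuclideanSpace ℝ (Fin d) := -(η • v) with hudef
  set c : ℝ → EuclideanSpace ℝ (Fin d) := fun t => x + t • u with hcdef
  have hLdiff : Differentiable ℝ L := hL.differentiable (by norm_num)
  have hc : ∀ t : ℝ, HasDerivAt c u t := by
    intro t
    have h := (hasDerivAt_id t).smul_const u
    simpa [hcdef] using h.const_add x
  set φ : ℝ → ℝ := fun t => L (c t) with hφdef
  set φ₁ : ℝ → ℝ := fun t => ⟪u, gradient L (c t)⟫ with hφ₁def
  have hφ : ∀ t, HasDerivAt φ (φ₁ t) t := by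
    intro t
    have h1 : HasFDerivAt L (fderiv ℝ L (c t)) (c t) := (hLdiff (c t)).hasFDerivAt
    have h2 := h1.comp_hasDerivAt t (hc t)
    have h3 : fderiv ℝ L (c t) u = φ₁ t :=
      (Statement18Aux.inner_grad (c t) u).symm.trans (real_inner_comm _ _)
    rw [h3] at h2
    exact h2
  have hφ₁ : ∀ t, HasDerivAt φ₁ (⟪u, Hess L (c t) u⟫) t := by
    intro t
    have hG : HasDerivAt (fun s => gradient L (c s)) (Hess L (c t) u) t :=
      (Statement18Aux.hasFDerivGrad hL (c t)).comp_hasDerivAt t (hc t)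
    have h := (innerSL ℝ u).hasFDerivAt.comp_hasDerivAt t hG
    exact h
  -- pointwise bound on the second derivative of φ
  set M : ℝ := η ^ 2 * (N * ⟪g, v⟫) with hMdef
  have hgv : ⟪v, Hess L x v⟫ = ⟪g, v⟫ := by rw [hHv, real_inner_comm]
  have hMb : ∀ t : ℝ, ⟪u, Hess L (c t) u⟫ ≤ M := by
    intro t
    have hcmp := Statement18Aux.quad_comparison (Hess L x) (Hess L (c t))
      (Statement18Aux.hess_symm hL x) (Statement18Aux.hess_symm hL (c t))
      (fun w hw => hPD x w hw)
      (fun w => by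
        rcases eq_or_ne w 0 with rfl | hw
        · simp
        · exact le_of_lt (hPD (c t) w hw))
      hinv1 N hN (hbound x (c t)) v
    have hexp : ⟪u, Hess L (c t) u⟫ = η ^ 2 * ⟪v, Hess L (c t) v⟫ := by
      rw [hudef, map_neg, inner_neg_neg, map_smul, real_inner_smul_left,
        real_inner_smul_right]
      ring
    rw [hexp, hMdef, ← hgv]
    have h2 : (0:ℝ) ≤ η ^ 2 := sq_nonneg η
    nlinarith [hcmp, h2]
  -- first comparison function
  set w1 : ℝ → ℝ := fun t => φ₁ t - φ₁ 0 - t * M with hw1def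
  have hw1 : ∀ t, HasDerivAt w1 (⟪u, Hess L (c t) u⟫ - M) t := by
    intro t
    have h := ((hφ₁ t).sub_const (φ₁ 0)).sub ((hasDerivAt_id t).mul_const M)
    rw [one_mul] at h
    exact h
  have hw1diff : Differentiable ℝ w1 := fun t => (hw1 t).differentiableAt
  have hanti1 : AntitoneOn w1 Set.univ := by
    apply antitoneOn_of_deriv_nonpos convex_univ hw1diff.continuous.continuousOn
      (by simp [hw1diff.differentiableOn])
    intro t ht
    rw [(hw1 t).deriv]
    exact sub_nonpos.mpr (hMb t)
  have hw10 : w1 0 = 0 := by simp [hw1def]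
  have hw1le : ∀ t : ℝ, 0 ≤ t → w1 t ≤ 0 := by
    intro t ht
    rw [← hw10]
    exact hanti1 (Set.mem_univ 0) (Set.mem_univ t) ht
  -- second comparison function
  set w2 : ℝ → ℝ := fun t => φ t - φ 0 - t * φ₁ 0 - t ^ 2 / 2 * M with hw2def
  have hw2 : ∀ t, HasDerivAt w2 (w1 t) t := by
    intro t
    have h4 : HasDerivAt (fun s : ℝ => s ^ 2 / 2 * M) (t * M) t := by
      have := ((hasDerivAt_pow 2 t).div_const 2).mul_const M
      exact this.congr_deriv (by rw [show (2:ℕ) - 1 = 1 from rfl]; push_cast; ring)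
    have h := (((hφ t).sub_const (φ 0)).sub ((hasDerivAt_id t).mul_const (φ₁ 0))).sub h4
    have he2 : φ₁ t - 1 * φ₁ 0 - t * M = w1 t := by rw [hw1def]; ring
    rw [← he2]
    exact h
  have hw2diff : Differentiable ℝ w2 := fun t => (hw2 t).differentiableAt
  have hanti2 : AntitoneOn w2 (Set.Ici 0) := by
    apply antitoneOn_of_deriv_nonpos (convex_Ici 0) hw2diff.continuous.continuousOn
      (by simp [hw2diff.differentiableOn])
    intro t ht
    rw [interior_Ici] at ht
    rw [(hw2 t).deriv]
    exact hw1le t (le_of_lt ht)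
  have hw20 : w2 0 = 0 := by simp [hw2def]
  have hfin : w2 1 ≤ 0 := by
    rw [← hw20]
    exact hanti2 (Set.mem_Ici.mpr le_rfl) (Set.mem_Ici.mpr zero_le_one) zero_le_one
  -- unfold
  have hc1 : c 1 = x - η • v := by
    rw [hcdef]
    simp [hudef, sub_eq_add_neg]
  have hc0 : c 0 = x := by simp [hcdef]
  have hφ₁0 : φ₁ 0 = -(η * ⟪g, v⟫) := by
    rw [hφ₁def]
    simp only [hc0, hudef, ← hgdef, inner_neg_left, real_inner_smul_left]
    rw [real_inner_comm]
  have hw21 : w2 1 = L (x - η • v) - L x - 1 * φ₁ 0 - 1 ^ 2 / 2 * M := by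
    rw [hw2def]
    simp only [hφdef, hc1, hc0]
  rw [hw21] at hfin
  rw [hφ₁0, hMdef] at hfin
  have : L (x - η • v) - L x ≤ -(η - N / 2 * η ^ 2) * ⟪g, v⟫ := by nlinarith [hfin]
  exact this

end
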